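/- In the group P = ⟨a, b | b⁻¹a²b = a⁻², a⁻¹b²a = b⁻²⟩, the elements x = a², y = b², z = abab pairwise commute. -/

import Mathlib

/-- The relators of the Promislow/Hantzsche–Wendt group
`P = ⟨a, b ∣ b⁻¹a²b = a⁻², a⁻¹b²a = b⁻²⟩`, over generators indexed by `Fin 2`
(`0 ↦ a`, `1 ↦ b`). -/
def promislowRels : Set (FreeGroup (Fin 2)) :=
  { (FreeGroup.of 1)⁻¹ * (FreeGroup.of 0) ^ 2 * (FreeGroup.of 1) * (FreeGroup.of 0) ^ 2,
    (FreeGroup.of 0)⁻¹ * (FreeGroup.of 1) ^ 2 * (FreeGroup.of 0) * (FreeGroup.of 1) ^ 2 }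

/-- The Promislow group `P`. -/
def PromislowGroup : Type := PresentedGroup promislowRels

instance : Group PromislowGroup := by unfold PromislowGroup; infer_instance

theorem promislow_rel_one (r : FreeGroup (Fin 2)) (hr : r ∈ promislowRels) :
    PresentedGroup.mk promislowRels r = 1 :=
  (QuotientGroup.eq_one_iff r).mpr (Subgroup.subset_normalClosure hr)

/-- In `P = ⟨a, b ∣ b⁻¹a²b = a⁻², a⁻¹b²a = b⁻²⟩` the elements
`x = a²`, `y = b²`, `z = abab` pairwise commute. -/
theorem promislow_xyz_commute :
    let a : PromislowGroup := PresentedGroup.of 0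
    let b : PromislowGroup := PresentedGroup.of 1
    Commute (a ^ 2) (b ^ 2) ∧ Commute (a ^ 2) (a * b * a * b) ∧
      Commute (b ^ 2) (a * b * a * b) := by
  intro a b
  have h1 : b⁻¹ * a ^ 2 * b * a ^ 2 = (1 : PromislowGroup) := by
    have := promislow_rel_one _ (Set.mem_insert _ _)
    exact this
  have h2 : a⁻¹ * b ^ 2 * a * b ^ 2 = (1 : PromislowGroup) := by
    have := promislow_rel_one _ (Set.mem_insert_of_mem _ rfl)
    exact this
  have hab : a ^ 2 * b = b * (a ^ 2)⁻¹ := by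
    rw [← mul_inv_eq_one]
    have e : a ^ 2 * b * (b * (a ^ 2)⁻¹)⁻¹ = b * (b⁻¹ * a ^ 2 * b * a ^ 2) * b⁻¹ := by group
    rw [e, h1]; group
  have hab' : (a ^ 2)⁻¹ * b = b * a ^ 2 := by
    rw [← mul_inv_eq_one]
    have e : (a ^ 2)⁻¹ * b * (b * a ^ 2)⁻¹ =
        ((a ^ 2)⁻¹ * b) * (b⁻¹ * a ^ 2 * b * a ^ 2)⁻¹ * (b⁻¹ * a ^ 2) := by group
    rw [e, h1]; group
  have hba : b ^ 2 * a = a * (b ^ 2)⁻¹ := by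
    rw [← mul_inv_eq_one]
    have e : b ^ 2 * a * (a * (b ^ 2)⁻¹)⁻¹ = a * (a⁻¹ * b ^ 2 * a * b ^ 2) * a⁻¹ := by group
    rw [e, h2]; group
  have hba' : (b ^ 2)⁻¹ * a = a * b ^ 2 := by
    rw [← mul_inv_eq_one]
    have e : (b ^ 2)⁻¹ * a * (a * b ^ 2)⁻¹ =
        ((b ^ 2)⁻¹ * a) * (a⁻¹ * b ^ 2 * a * b ^ 2)⁻¹ * (a⁻¹ * b ^ 2) := by group
    rw [e, h2]; group
  refine ⟨?_, ?_, ?_⟩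
  · show a ^ 2 * b ^ 2 = b ^ 2 * a ^ 2
    calc a ^ 2 * b ^ 2 = a ^ 2 * b * b := by rw [pow_two b, ← mul_assoc]
      _ = b * (a ^ 2)⁻¹ * b := by rw [hab]
      _ = b * ((a ^ 2)⁻¹ * b) := by rw [mul_assoc]
      _ = b * (b * a ^ 2) := by rw [hab']
      _ = b ^ 2 * a ^ 2 := by rw [← mul_assoc, ← pow_two]
  · show a ^ 2 * (a * b * a * b) = a * b * a * b * a ^ 2
    calc a ^ 2 * (a * b * a * b) = a * (a ^ 2 * b) * (a * b) := by group
      _ = a * (b * (a ^ 2)⁻¹) * (a * b) := by rw [hab]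
      _ = a * b * a⁻¹ * b := by group
      _ = a * b * a * ((a ^ 2)⁻¹ * b) := by group
      _ = a * b * a * (b * a ^ 2) := by rw [hab']
      _ = a * b * a * b * a ^ 2 := by group
  · show b ^ 2 * (a * b * a * b) = a * b * a * b * b ^ 2
    calc b ^ 2 * (a * b * a * b) = b ^ 2 * a * (b * a * b) := by group
      _ = a * (b ^ 2)⁻¹ * (b * a * b) := by rw [hba]
      _ = a * b⁻¹ * a * b := by group
      _ = a * b * ((b ^ 2)⁻¹ * a) * b := by group
      _ = a * b * (a * b ^ 2) * b := by rw [hba']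
      _ = a * b * a * b * b ^ 2 := by group
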